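/- Let n ≥ 1, let R be an n×n real upper triangular matrix with positive diagonal entries r_11,…,r_nn, let σ > 0, and let B = {x ∈ ℤⁿ : ℓ ≤ x ≤ u} with ℓ, u ∈ ℤⁿ and ℓ_i < u_i for all i. Let x̂ be uniformly distributed over B and let ṽ ~ N(0, σ²Iₙ) be independent of x̂. Let x^BR be the box-constrained rounding detector computed from d = x̂ + R⁻¹ṽ (x_i^BR = ℓ_i if ⌊d_i⌉ ≤ ℓ_i, x_i^BR = ⌊d_i⌉ if ℓ_i < ⌊d_i⌉ < u_i, x_i^BR = u_i if ⌊d_i⌉ ≥ u_i), and let x^BB be the box-constrained Babai detector computed from ỹ = R x̂ + ṽ by the recursion c_i = (ỹ_i − ∑_{j=i+1}^n r_ij x_j^BB)/r_ii, x_i^BB = ℓ_i if ⌊c_i⌉ ≤ ℓ_i, x_i^BB = ⌊c_i⌉ if ℓ_i < ⌊c_i⌉ < u_i, x_i^BB = u_i if ⌊c_i⌉ ≥ u_i, for i = n,…,1. Then Pr(x^BR = x̂) ≤ Pr(x^BB = x̂). -/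

import Mathlib

open MeasureTheory ProbabilityTheory Matrix Set
open scoped ENNReal NNReal Real

/-- Nearest integer rounding, with ties broken toward the integer of smaller magnitude. -/
noncomputable def nround (x : ℝ) : ℤ :=
  if 0 ≤ x then ⌈x - 1 / 2⌉ else ⌊x + 1 / 2⌋

/-- Clamp the nearest integer of `c` to the interval `[a, b]`:
`a` if `⌊c⌉ ≤ a`, `b` if `⌊c⌉ ≥ b`, and `⌊c⌉` otherwise. -/
noncomputable def clampInt (a b : ℤ) (c : ℝ) : ℤ :=
  if nround c ≤ a then a
  else if b ≤ nround c then b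
  else nround c

/-- The box-constrained rounding detector computed from `d`. -/
noncomputable def roundDetector {n : ℕ} (l u : Fin n → ℤ) (d : Fin n → ℝ) : Fin n → ℤ :=
  fun i => clampInt (l i) (u i) (d i)

/-- Auxiliary recursion for the box-constrained Babai detector: `babaiAux R l u y k`
has the correct Babai values at indices `i` with `i + k ≥ n` (computed from the last
index downwards). -/
noncomputable def babaiAux {n : ℕ} (R : Matrix (Fin n) (Fin n) ℝ) (l u : Fin n → ℤ)
    (y : Fin n → ℝ) : ℕ → Fin n → ℤ
  | 0 => fun _ => 0
  | k + 1 => fun i =>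
      if i.val + (k + 1) = n then
        clampInt (l i) (u i)
          ((y i - ∑ j : Fin n, if i < j then R i j * (babaiAux R l u y k j : ℝ) else 0) / R i i)
      else babaiAux R l u y k i

/-- The box-constrained Babai detector computed from `y`, for upper triangular `R`:
for `i = n, …, 1`, `c_i = (y_i - ∑_{j>i} r_{ij} x_j^BB)/r_{ii}` and `x_i^BB` is `⌊c_i⌉`
clamped to `[l_i, u_i]`. -/
noncomputable def babaiDetector {n : ℕ} (R : Matrix (Fin n) (Fin n) ℝ) (l u : Fin n → ℤ)
    (y : Fin n → ℝ) : Fin n → ℤ :=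
  babaiAux R l u y n

/-- `phi σ ζ = (2/√(2π)) ∫_0^{ζ/(2σ)} exp(-t²/2) dt`. -/
noncomputable def phi (σ ζ : ℝ) : ℝ :=
  2 / Real.sqrt (2 * Real.pi) * ∫ t in (0:ℝ)..(ζ / (2 * σ)), Real.exp (-(t ^ 2) / 2)


lemma nround_le (x : ℝ) : (nround x : ℝ) ≤ x + 1 / 2 := by
  unfold nround
  split_ifs with h
  · have h1 : (⌈x - 1/2⌉ : ℝ) < x - 1/2 + 1 := Int.ceil_lt_add_one _
    linarith
  · exact Int.floor_le _

lemma le_nround (x : ℝ) : x - 1 / 2 ≤ (nround x : ℝ) := by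
  unfold nround
  split_ifs with h
  · exact Int.le_ceil _
  · have h1 : x + 1/2 - 1 < (⌊x + 1/2⌋ : ℝ) := Int.sub_one_lt_floor _
    linarith

lemma nround_intCast (a : ℤ) : nround (a : ℝ) = a := by
  have h1 := nround_le (a : ℝ)
  have h2 := le_nround (a : ℝ)
  have : (a : ℝ) - 1 < (nround a : ℝ) := by linarith
  have hlt : a - 1 < nround (a : ℝ) := by exact_mod_cast this
  have hle : nround (a : ℝ) ≤ a := by
    have : (nround (a:ℝ) : ℝ) < a + 1 := by linarith
    exact_mod_cast Int.lt_add_one_iff.mp (by exact_mod_cast this)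
  omega

lemma nround_mono : Monotone nround := by
  intro x y hxy
  unfold nround
  split_ifs with hx hy hy
  · exact Int.ceil_le_ceil (by linarith)
  · linarith
  · -- x < 0 ≤ y
    push_neg at hx
    have h1 : ⌊x + 1/2⌋ < 1 := by
      rw [Int.floor_lt]; push_cast; linarith
    have h2 : (-1:ℤ) < ⌈y - 1/2⌉ := by
      rw [Int.lt_ceil]; push_cast; linarith
    omega
  · exact Int.floor_le_floor (by linarith)

lemma nround_add_int_lt (a : ℤ) (t : ℝ) (ht : |t| < 1/2) : nround ((a : ℝ) + t) = a := by
  rw [abs_lt] at ht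
  have h1 := nround_le ((a:ℝ) + t)
  have h2 := le_nround ((a:ℝ) + t)
  have hlt : (a : ℝ) - 1 < nround ((a:ℝ) + t) := by linarith
  have hlt2 : (nround ((a:ℝ)+t) : ℝ) < a + 1 := by linarith
  have g1 : a - 1 < nround ((a:ℝ)+t) := by exact_mod_cast hlt
  have g2 : nround ((a:ℝ)+t) < a + 1 := by exact_mod_cast hlt2
  omega

lemma clampInt_eq_of_abs_lt {l u a : ℤ} (hla : l ≤ a) (hau : a ≤ u) {t : ℝ}
    (ht : |t| < 1/2) : clampInt l u ((a : ℝ) + t) = a := by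
  unfold clampInt
  rw [nround_add_int_lt a t ht]
  split_ifs with h1 h2 <;> omega

lemma clampInt_u_of_nonneg {l u : ℤ} (hlu : l ≤ u) {t : ℝ} (ht : 0 ≤ t) :
    clampInt l u ((u : ℝ) + t) = u := by
  have hm : u ≤ nround ((u:ℝ) + t) := by
    have := nround_mono (show (u:ℝ) ≤ (u:ℝ) + t by linarith)
    rwa [nround_intCast] at this
  unfold clampInt
  split_ifs with h1 h2 <;> omega

lemma clampInt_l_of_nonpos {l u : ℤ} (hlu : l ≤ u) {t : ℝ} (ht : t ≤ 0) :
    clampInt l u ((l : ℝ) + t) = l := by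
  have hm : nround ((l:ℝ) + t) ≤ l := by
    have := nround_mono (show (l:ℝ) + t ≤ (l:ℝ) by linarith)
    rwa [nround_intCast] at this
  unfold clampInt
  split_ifs with h1 h2 <;> omega

lemma eq_u_of_clampInt {l u a : ℤ} {t : ℝ} (ht : 1/2 < t)
    (h : clampInt l u ((a : ℝ) + t) = a) : a = u := by
  have hgt : a < nround ((a:ℝ) + t) := by
    have h2 := le_nround ((a:ℝ) + t)
    have : (a : ℝ) < nround ((a:ℝ)+t) := by linarith
    exact_mod_cast this
  unfold clampInt at h
  split_ifs at h with h1 h2 <;> omega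

lemma eq_l_of_clampInt {l u a : ℤ} {t : ℝ} (ht : t < -(1/2))
    (h : clampInt l u ((a : ℝ) + t) = a) : a = l := by
  have hgt : nround ((a:ℝ) + t) < a := by
    have h2 := nround_le ((a:ℝ) + t)
    have : (nround ((a:ℝ)+t) : ℝ) < a := by linarith
    exact_mod_cast this
  unfold clampInt at h
  split_ifs at h with h1 h2 <;> omega

lemma measurable_nround : Measurable nround := by
  unfold nround
  exact Measurable.ite measurableSet_Ici
    (Int.measurable_ceil.comp (measurable_id.sub measurable_const))
    (Int.measurable_floor.comp (measurable_id.add measurable_const))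

lemma measurable_clampInt (a b : ℤ) : Measurable (clampInt a b) := by
  unfold clampInt
  apply Measurable.ite (measurable_nround measurableSet_Iic) measurable_const
  exact Measurable.ite (measurable_nround measurableSet_Ici) measurable_const measurable_nround

section Shift

/-- For an even, nonneg, continuous function decreasing on `[0, ∞)`, the integral over an
interval of fixed length is maximized when the interval is centered at 0. -/
lemma shifted_integral_le (g : ℝ → ℝ) (hc : Continuous g)
    (heven : ∀ x, g (-x) = g x)
    (hmono : ∀ x y : ℝ, 0 ≤ x → x ≤ y → g y ≤ g x)
    {δ : ℝ} (hδ : 0 ≤ δ) (m : ℝ) :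
    (∫ x in (m - δ)..(m + δ), g x) ≤ ∫ x in (-δ)..δ, g x := by
  have hint : ∀ a b : ℝ, IntervalIntegrable g volume a b := fun a b =>
    (hc.intervalIntegrable a b)
  -- reduce to the case 0 ≤ m
  have key : ∀ m : ℝ, 0 ≤ m → (∫ x in (m - δ)..(m + δ), g x) ≤ ∫ x in (-δ)..δ, g x := by
    intro y hy
    have h1 : (∫ x in (y - δ)..(y + δ), g x)
        = (∫ x in (y - δ)..δ, g x) + ∫ x in δ..(y + δ), g x :=
      (intervalIntegral.integral_add_adjacent_intervals (hint _ _) (hint _ _)).symm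
    have h2 : (∫ x in (-δ)..δ, g x)
        = (∫ x in (-δ)..(y - δ), g x) + ∫ x in (y - δ)..δ, g x :=
      (intervalIntegral.integral_add_adjacent_intervals (hint _ _) (hint _ _)).symm
    have h3 : (∫ x in (-δ)..(y - δ), g x) = ∫ x in δ..(y + δ), g (x - 2 * δ) := by
      rw [intervalIntegral.integral_comp_sub_right (fun x => g x) (2 * δ)]
      norm_num
      ring_nf
    have h4 : (∫ x in δ..(y + δ), g x) ≤ ∫ x in δ..(y + δ), g (x - 2 * δ) := by
      apply intervalIntegral.integral_mono_on (by linarith)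
      · exact hint _ _
      · exact (hc.comp (by continuity)).intervalIntegrable _ _
      · intro x hx
        rcases hx with ⟨hx1, _⟩
        rcases le_or_gt 0 (x - 2 * δ) with h | h
        · exact hmono _ _ h (by linarith)
        · rw [← heven (x - 2*δ)]
          exact hmono _ _ (by linarith) (by linarith)
    linarith [h1, h2, h3, h4]
  rcases le_or_gt 0 m with hm | hm
  · exact key m hm
  · have h := intervalIntegral.integral_comp_neg (f := g) (a := -m - δ) (b := -m + δ)
    simp_rw [heven] at h
    rw [show -(-m + δ) = m - δ by ring, show -(-m - δ) = m + δ by ring] at h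
    rw [← h]
    exact key (-m) (by linarith)

lemma gaussianPDFReal_even (v : ℝ≥0) (x : ℝ) :
    gaussianPDFReal 0 v (-x) = gaussianPDFReal 0 v x := by
  simp [gaussianPDFReal, neg_sq]

lemma continuous_gaussianPDFReal' (μ : ℝ) (v : ℝ≥0) : Continuous (gaussianPDFReal μ v) := by
  unfold gaussianPDFReal
  continuity

lemma gaussianPDFReal_anti (v : ℝ≥0) {x y : ℝ} (hx : 0 ≤ x) (hxy : x ≤ y) :
    gaussianPDFReal 0 v y ≤ gaussianPDFReal 0 v x := by
  unfold gaussianPDFReal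
  apply mul_le_mul_of_nonneg_left _ (by positivity)
  apply Real.exp_le_exp.mpr
  rcases eq_or_ne v 0 with hv | hv
  · simp [hv]
  · have h2v : (0:ℝ) < 2 * (v:ℝ) := by
      have : (0:ℝ) < v := lt_of_le_of_ne v.coe_nonneg (by exact_mod_cast (Ne.symm hv))
      linarith
    gcongr

/-- Gaussian anti-concentration: an interval of fixed length centered at `m` has gaussian
measure at most that of the centered interval. -/
lemma gaussian_Icc_le (v : ℝ≥0) (hv : v ≠ 0) {δ : ℝ} (hδ : 0 ≤ δ) (m : ℝ) :
    gaussianReal 0 v (Icc (m - δ) (m + δ)) ≤ gaussianReal 0 v (Icc (-δ) δ) := by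
  rw [gaussianReal_apply_eq_integral _ hv, gaussianReal_apply_eq_integral _ hv]
  apply ENNReal.ofReal_le_ofReal
  rw [integral_Icc_eq_integral_Ioc, integral_Icc_eq_integral_Ioc,
    ← intervalIntegral.integral_of_le (by linarith : m - δ ≤ m + δ),
    ← intervalIntegral.integral_of_le (by linarith : (-δ : ℝ) ≤ δ)]
  apply shifted_integral_le _ (continuous_gaussianPDFReal' 0 v) (gaussianPDFReal_even v) _ hδ
  intro x y hx hxy
  exact gaussianPDFReal_anti v hx hxy

end Shift
noncomputable def Gfun (δ : ℝ) (α : ℝ≥0∞) (x : ℝ) : ℝ≥0∞ :=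
  if |x| ≤ δ then 1 else α

lemma measurable_Gfun (δ : ℝ) (α : ℝ≥0∞) : Measurable (Gfun δ α) := by
  unfold Gfun
  exact Measurable.ite (measurableSet_le (by fun_prop) measurable_const)
    measurable_const measurable_const

lemma Gfun_le_one {δ : ℝ} {α : ℝ≥0∞} (hα : α ≤ 1) (x : ℝ) : Gfun δ α x ≤ 1 := by
  unfold Gfun; split_ifs <;> simp [hα]

lemma lintegral_Gfun (μ : Measure ℝ) (δ : ℝ) (α : ℝ≥0∞) (f : ℝ → ℝ) (hf : Measurable f) :
    ∫⁻ t, Gfun δ α (f t) ∂μ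
      = μ {t | |f t| ≤ δ} + α * μ {t | ¬ |f t| ≤ δ} := by
  have hS : MeasurableSet {t | |f t| ≤ δ} := measurableSet_le (by fun_prop) measurable_const
  rw [← lintegral_add_compl (f := fun t => Gfun δ α (f t)) hS]
  have e1 : ∫⁻ t in {t | |f t| ≤ δ}, Gfun δ α (f t) ∂μ
      = ∫⁻ _ in {t | |f t| ≤ δ}, (1 : ℝ≥0∞) ∂μ :=
    setLIntegral_congr_fun hS (fun t (ht : |f t| ≤ δ) => by
      simp only [Gfun, if_pos ht])
  have e2 : ∫⁻ t in {t | |f t| ≤ δ}ᶜ, Gfun δ α (f t) ∂μ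
      = ∫⁻ _ in {t | |f t| ≤ δ}ᶜ, α ∂μ :=
    setLIntegral_congr_fun hS.compl (fun t (ht : ¬ |f t| ≤ δ) => by
      simp only [Gfun, if_neg ht])
  rw [e1, e2, setLIntegral_const, setLIntegral_const, one_mul]
  rfl

lemma abs_affine_set (a c δ : ℝ) (ha : a ≠ 0) :
    {t : ℝ | |a * t + c| ≤ δ} = Icc (-c/a - δ/|a|) (-c/a + δ/|a|) := by
  ext t
  have habs : (0:ℝ) < |a| := abs_pos.mpr ha
  have key : |a * t + c| = |a| * |t - (-c/a)| := by
    rw [← abs_mul]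
    congr 1
    field_simp
    ring
  simp only [Set.mem_setOf_eq, Set.mem_Icc, key]
  rw [← le_div_iff₀' habs]
  rw [abs_sub_le_iff]
  constructor
  · rintro ⟨h1, h2⟩; constructor <;> linarith
  · rintro ⟨h1, h2⟩; constructor <;> linarith

lemma gauss_prob_affine_le (v : ℝ≥0) (hv : v ≠ 0) {δ : ℝ} (hδ : 0 ≤ δ) (a c : ℝ) :
    gaussianReal 0 v {t | |a * t + c| ≤ δ}
      ≤ gaussianReal 0 v {t | |a * t + 0| ≤ δ} := by
  rcases eq_or_ne a 0 with ha | ha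
  · have : {t : ℝ | |a * t + 0| ≤ δ} = Set.univ := by
      ext t; simp [ha, hδ]
    rw [this]
    exact (measure_mono (Set.subset_univ _)).trans_eq (by simp)
  · rw [abs_affine_set a c δ ha, abs_affine_set a 0 δ ha]
    have h0 : -(0:ℝ)/a = 0 := by simp
    rw [h0, zero_sub, zero_add]
    exact gaussian_Icc_le v hv (by positivity) _

lemma lintegral_Gfun_shift (v : ℝ≥0) (hv : v ≠ 0) {δ : ℝ} (hδ : 0 ≤ δ) {α : ℝ≥0∞}
    (hα : α ≤ 1) (a c : ℝ) :
    ∫⁻ t, Gfun δ α (a * t + c) ∂(gaussianReal 0 v)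
      ≤ ∫⁻ t, Gfun δ α (a * t) ∂(gaussianReal 0 v) := by
  have hm1 : Measurable (fun t : ℝ => a * t + c) := by fun_prop
  have hm2 : Measurable (fun t : ℝ => a * t) := by fun_prop
  rw [lintegral_Gfun _ δ α _ hm1, lintegral_Gfun _ δ α _ hm2]
  set γ := gaussianReal 0 v
  set q := γ {t | |a * t + c| ≤ δ} with hq
  set p := γ {t | |a * t| ≤ δ} with hp
  have hqp : q ≤ p := by
    have := gauss_prob_affine_le v hv hδ a c
    simpa only [add_zero] using this
  have hcompl : ∀ s : Set ℝ, MeasurableSet s → γ sᶜ = 1 - γ s := by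
    intro s hs
    rw [measure_compl hs (measure_ne_top _ _), measure_univ]
  have hSq : MeasurableSet {t : ℝ | |a * t + c| ≤ δ} :=
    measurableSet_le (by fun_prop) measurable_const
  have hSp : MeasurableSet {t : ℝ | |a * t| ≤ δ} :=
    measurableSet_le (by fun_prop) measurable_const
  have e1 : {t : ℝ | ¬ |a * t + c| ≤ δ} = {t : ℝ | |a * t + c| ≤ δ}ᶜ := rfl
  have e2 : {t : ℝ | ¬ |a * t| ≤ δ} = {t : ℝ | |a * t| ≤ δ}ᶜ := rfl
  rw [e1, e2, hcompl _ hSq, hcompl _ hSp, ← hq, ← hp]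
  have hp1 : p ≤ 1 := by rw [hp]; exact prob_le_one
  have key : (1:ℝ≥0∞) - q = (1 - p) + (p - q) := (tsub_add_tsub_cancel hp1 hqp).symm
  rw [key, mul_add]
  calc q + (α * (1 - p) + α * (p - q))
      ≤ q + (α * (1 - p) + 1 * (p - q)) := by gcongr
    _ = (q + (p - q)) + α * (1 - p) := by ring
    _ = p + α * (1 - p) := by rw [add_tsub_cancel_of_le hqp]

section Core

lemma measurable_affine_sum {N : ℕ} (A : Fin N → ℝ) (c : ℝ) :
    Measurable (fun x : Fin N → ℝ => (∑ j, A j * x j) + c) := by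
  apply Measurable.add_const
  exact Finset.measurable_sum _ (fun j _ => (measurable_pi_apply j).const_mul _)

lemma core_ineq (v : ℝ≥0) (hv : v ≠ 0) :
    ∀ (N : ℕ) (A : Matrix (Fin N) (Fin N) ℝ), (∀ i j, j < i → A i j = 0) →
    ∀ (δ : Fin N → ℝ), (∀ i, 0 ≤ δ i) → ∀ (α : Fin N → ℝ≥0∞), (∀ i, α i ≤ 1) →
    ∀ (c : Fin N → ℝ),
    ∫⁻ x : Fin N → ℝ, ∏ i, Gfun (δ i) (α i) ((∑ j, A i j * x j) + c i)
        ∂(Measure.pi fun _ => gaussianReal 0 v)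
      ≤ ∏ i, ∫⁻ t : ℝ, Gfun (δ i) (α i) (A i i * t) ∂(gaussianReal 0 v) := by
  intro N
  induction N with
  | zero =>
    intro A hA δ hδ α hα c
    simp only [Finset.univ_eq_empty, Finset.prod_empty, lintegral_const]
    simp
  | succ N IH =>
    intro A hA δ hδ α hα c
    set γ := gaussianReal 0 v with hγ
    set μn := Measure.pi (fun _ : Fin N => γ) with hμn
    set F : (Fin (N+1) → ℝ) → ℝ≥0∞ :=
      fun x => ∏ i, Gfun (δ i) (α i) ((∑ j, A i j * x j) + c i) with hF
    have hFm : Measurable F := by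
      apply Finset.measurable_prod
      intro i _
      exact (measurable_Gfun _ _).comp (measurable_affine_sum (fun j => A i j) (c i))
    set e := MeasurableEquiv.piFinSuccAbove (fun _ : Fin (N+1) => ℝ) 0 with he
    have mp : MeasurePreserving e.symm (γ.prod μn)
        (Measure.pi fun _ : Fin (N+1) => γ) :=
      (measurePreserving_piFinSuccAbove (fun _ : Fin (N+1) => γ) 0).symm e
    -- split of the integrand
    set C : (Fin N → ℝ) → ℝ := fun w => (∑ j, A 0 j.succ * w j) + c 0 with hC
    set Rest : (Fin N → ℝ) → ℝ≥0∞ :=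
      fun w => ∏ i : Fin N,
        Gfun (δ i.succ) (α i.succ) ((∑ j, A i.succ j.succ * w j) + c i.succ) with hRest
    have hsplit : ∀ (x : ℝ) (w : Fin N → ℝ),
        F (e.symm (x, w)) = Gfun (δ 0) (α 0) (A 0 0 * x + C w) * Rest w := by
      intro x w
      have hxw : e.symm (x, w) = (Fin.cons x w : Fin (N+1) → ℝ) := by
        simp only [he, MeasurableEquiv.piFinSuccAbove_symm_apply, Fin.insertNthEquiv,
          Equiv.coe_fn_mk, Fin.insertNth_zero]
        rfl
      rw [hxw]
      simp only [hF, hRest, hC]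
      rw [Fin.prod_univ_succ]
      congr 1
      · congr 1
        rw [Fin.sum_univ_succ]
        simp only [Fin.cons_zero, Fin.cons_succ]
        ring
      · apply Finset.prod_congr rfl
        intro i _
        congr 1
        rw [Fin.sum_univ_succ]
        simp only [Fin.cons_zero, Fin.cons_succ]
        rw [hA i.succ 0 (Fin.succ_pos i)]
        ring
    have hFem : Measurable (fun p : ℝ × (Fin N → ℝ) => F (e.symm p)) :=
      hFm.comp e.symm.measurable
    have hRestm : Measurable Rest := by
      apply Finset.measurable_prod
      intro i _
      exact (measurable_Gfun _ _).comp
        (measurable_affine_sum (fun j => A i.succ j.succ) (c i.succ))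
    have hCm : Measurable C := measurable_affine_sum _ _
    calc ∫⁻ x, F x ∂(Measure.pi fun _ : Fin (N+1) => γ)
        = ∫⁻ p, F (e.symm p) ∂(γ.prod μn) := (mp.lintegral_comp hFm).symm
      _ = ∫⁻ x, ∫⁻ w, F (e.symm (x, w)) ∂μn ∂γ := lintegral_prod _ hFem.aemeasurable
      _ = ∫⁻ w, ∫⁻ x, F (e.symm (x, w)) ∂γ ∂μn :=
          lintegral_lintegral_swap hFem.aemeasurable
      _ = ∫⁻ w, (∫⁻ x, Gfun (δ 0) (α 0) (A 0 0 * x + C w) ∂γ) * Rest w ∂μn := by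
          apply lintegral_congr
          intro w
          simp_rw [hsplit]
          have hm : Measurable (fun x : ℝ => Gfun (δ 0) (α 0) (A 0 0 * x + C w)) :=
            (measurable_Gfun _ _).comp (by fun_prop)
          rw [lintegral_mul_const _ hm]
      _ ≤ ∫⁻ w, (∫⁻ t, Gfun (δ 0) (α 0) (A 0 0 * t) ∂γ) * Rest w ∂μn := by
          apply lintegral_mono
          intro w
          apply mul_le_mul_left
          exact lintegral_Gfun_shift v hv (hδ 0) (hα 0) (A 0 0) (C w)
      _ = (∫⁻ t, Gfun (δ 0) (α 0) (A 0 0 * t) ∂γ) * ∫⁻ w, Rest w ∂μn :=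
          lintegral_const_mul _ hRestm
      _ ≤ (∫⁻ t, Gfun (δ 0) (α 0) (A 0 0 * t) ∂γ) *
            ∏ i : Fin N, ∫⁻ t, Gfun (δ i.succ) (α i.succ) (A i.succ i.succ * t) ∂γ := by
          apply mul_le_mul_right
          exact IH (A.submatrix Fin.succ Fin.succ)
            (fun i j hij => hA i.succ j.succ (by simpa using hij))
            (fun i => δ i.succ) (fun i => hδ i.succ)
            (fun i => α i.succ) (fun i => hα i.succ)
            (fun i => c i.succ)
      _ = ∏ i : Fin (N+1), ∫⁻ t, Gfun (δ i) (α i) (A i i * t) ∂γ :=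
          (Fin.prod_univ_succ
            (fun i : Fin (N+1) => ∫⁻ t, Gfun (δ i) (α i) (A i i * t) ∂γ)).symm

end Core
section Babai

variable {n : ℕ} (R : Matrix (Fin n) (Fin n) ℝ) (l u : Fin n → ℤ) (y : Fin n → ℝ)

lemma babaiAux_stab (i : Fin n) : ∀ m : ℕ,
    babaiAux R l u y (n - i.val + m) i = babaiAux R l u y (n - i.val) i := by
  intro m
  induction m with
  | zero => rfl
  | succ m ih =>
    have hi := i.isLt
    have hne : ¬ (i.val + (n - i.val + m + 1) = n) := by omega
    show babaiAux R l u y ((n - i.val + m) + 1) i = _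
    simp only [babaiAux, if_neg hne]
    exact ih

lemma babaiAux_stab' (i : Fin n) {k : ℕ} (hk : n - i.val ≤ k) :
    babaiAux R l u y k i = babaiAux R l u y (n - i.val) i := by
  obtain ⟨m, rfl⟩ := Nat.exists_eq_add_of_le hk
  exact babaiAux_stab R l u y i m

lemma babaiDetector_fixed (i : Fin n) :
    babaiDetector R l u y i = clampInt (l i) (u i)
      ((y i - ∑ j : Fin n, if i < j then R i j * (babaiDetector R l u y j : ℝ) else 0)
        / R i i) := by
  have hi := i.isLt
  have h1 : babaiDetector R l u y i = babaiAux R l u y (n - i.val) i :=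
    babaiAux_stab' R l u y i (by omega)
  have h2 : n - i.val = (n - i.val - 1) + 1 := by omega
  rw [h1, h2]
  simp only [babaiAux, if_pos (show i.val + (n - i.val - 1 + 1) = n by omega)]
  congr 2
  congr 1
  apply Finset.sum_congr rfl
  intro j _
  by_cases hij : i < j
  · rw [if_pos hij, if_pos hij]
    congr 2
    have hj : n - j.val ≤ n - i.val - 1 := by
      have : i.val < j.val := hij
      omega
    rw [babaiAux_stab' R l u y j hj]
    exact (babaiAux_stab' R l u y j (by omega)).symm
  · rw [if_neg hij, if_neg hij]

variable {R l u}

lemma babai_compute (hupper : ∀ i j : Fin n, j < i → R i j = 0)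
    (hdiag : ∀ i : Fin n, 0 < R i i) (b : Fin n → ℤ) (w : Fin n → ℝ) (i : Fin n)
    (z : Fin n → ℤ) (hz : ∀ j, i < j → z j = b j) :
    ((R *ᵥ fun j => (b j : ℝ)) i + w i
        - ∑ j : Fin n, if i < j then R i j * (z j : ℝ) else 0) / R i i
      = (b i : ℝ) + w i / R i i := by
  have hzsum : ∑ j : Fin n, (if i < j then R i j * (z j : ℝ) else 0)
      = ∑ j : Fin n, (if i < j then R i j * (b j : ℝ) else 0) := by
    apply Finset.sum_congr rfl
    intro j _
    by_cases hij : i < j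
    · rw [if_pos hij, if_pos hij, hz j hij]
    · rw [if_neg hij, if_neg hij]
  have hmv : (R *ᵥ fun j => (b j : ℝ)) i = ∑ j : Fin n, R i j * (b j : ℝ) := by
    simp [Matrix.mulVec, dotProduct]
  have hsum : ∑ j : Fin n, R i j * (b j : ℝ)
      - ∑ j : Fin n, (if i < j then R i j * (b j : ℝ) else 0) = R i i * b i := by
    rw [← Finset.sum_sub_distrib]
    rw [Finset.sum_eq_single i]
    · simp [lt_irrefl]
    · intro j _ hj
      by_cases h : i < j
      · rw [if_pos h]; ring
      · rw [if_neg h]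
        have hji : j < i := lt_of_le_of_ne (not_lt.mp h) hj
        rw [hupper i j hji]; ring
    · intro h
      exact absurd (Finset.mem_univ i) h
  rw [hzsum, hmv]
  rw [show (∑ j : Fin n, R i j * (b j : ℝ)) + w i
      - ∑ j : Fin n, (if i < j then R i j * (b j : ℝ) else 0) = R i i * b i + w i by
    linarith [hsum]]
  have hne : R i i ≠ 0 := (hdiag i).ne'
  field_simp

lemma babai_eq_iff (hupper : ∀ i j : Fin n, j < i → R i j = 0)
    (hdiag : ∀ i : Fin n, 0 < R i i) (b : Fin n → ℤ) (w : Fin n → ℝ) :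
    babaiDetector R l u (fun i => (R *ᵥ fun j => (b j : ℝ)) i + w i) = b ↔
      ∀ i, clampInt (l i) (u i) ((b i : ℝ) + w i / R i i) = b i := by
  set y : Fin n → ℝ := fun i => (R *ᵥ fun j => (b j : ℝ)) i + w i with hy
  constructor
  · intro hdet i
    have hfix := babaiDetector_fixed R l u y i
    rw [hdet] at hfix
    rw [babai_compute hupper hdiag b w i b (fun _ _ => rfl)] at hfix
    exact hfix.symm
  · intro hcl
    have step : ∀ i : Fin n, (∀ j, i < j → babaiDetector R l u y j = b j) →
        babaiDetector R l u y i = b i := by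
      intro i hj
      rw [babaiDetector_fixed R l u y i,
        babai_compute hupper hdiag b w i (babaiDetector R l u y) hj]
      exact hcl i
    have key : ∀ m : ℕ, ∀ i : Fin n, n ≤ i.val + m → babaiDetector R l u y i = b i := by
      intro m
      induction m with
      | zero => intro i hi; have := i.isLt; omega
      | succ m ih =>
        intro i hi
        apply step
        intro j hij
        apply ih
        have : i.val < j.val := hij
        omega
    funext i
    exact key n i (by omega)

end Babai
section Counting

lemma Nbound (l u : ℤ) (hlu : l < u) (t : ℝ) :
    (∑ a ∈ Finset.Icc l u, if clampInt l u ((a:ℝ) + t) = a then (1:ℝ≥0∞) else 0)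
      ≤ ((Finset.Icc l u).card : ℝ≥0∞)
          * Gfun (1/2) (((Finset.Icc l u).card : ℝ≥0∞))⁻¹ t := by
  have hMpos : 0 < (Finset.Icc l u).card :=
    Finset.card_pos.mpr (Finset.nonempty_Icc.mpr hlu.le)
  have hM0 : ((Finset.Icc l u).card : ℝ≥0∞) ≠ 0 := Nat.cast_ne_zero.mpr hMpos.ne'
  have hMtop : ((Finset.Icc l u).card : ℝ≥0∞) ≠ ⊤ := ENNReal.natCast_ne_top _
  by_cases habs : |t| ≤ 1/2
  · rw [Gfun, if_pos habs, mul_one]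
    calc (∑ a ∈ Finset.Icc l u, if clampInt l u ((a:ℝ) + t) = a then (1:ℝ≥0∞) else 0)
        ≤ ∑ _a ∈ Finset.Icc l u, (1:ℝ≥0∞) :=
          Finset.sum_le_sum (fun a _ => by split_ifs <;> simp)
      _ = ((Finset.Icc l u).card : ℝ≥0∞) := by
          rw [Finset.sum_const, nsmul_eq_mul, mul_one]
  · rw [Gfun, if_neg habs, ENNReal.mul_inv_cancel hM0 hMtop]
    have h2 : 1/2 < |t| := not_le.mp habs
    rcases lt_abs.mp h2 with ht | ht
    · -- t > 1/2 : only a = u possible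
      calc (∑ a ∈ Finset.Icc l u, if clampInt l u ((a:ℝ) + t) = a then (1:ℝ≥0∞) else 0)
          ≤ ∑ a ∈ Finset.Icc l u, (if a = u then (1:ℝ≥0∞) else 0) := by
            apply Finset.sum_le_sum
            intro a _
            by_cases hcl : clampInt l u ((a:ℝ) + t) = a
            · rw [if_pos hcl, if_pos (eq_u_of_clampInt ht hcl)]
            · rw [if_neg hcl]; exact zero_le
        _ = 1 := by
            rw [Finset.sum_ite_eq' (Finset.Icc l u) u (fun _ => (1:ℝ≥0∞))]
            rw [if_pos (Finset.mem_Icc.mpr ⟨hlu.le, le_refl u⟩)]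
    · -- t < -(1/2) : only a = l possible
      have ht' : t < -(1/2) := by linarith
      calc (∑ a ∈ Finset.Icc l u, if clampInt l u ((a:ℝ) + t) = a then (1:ℝ≥0∞) else 0)
          ≤ ∑ a ∈ Finset.Icc l u, (if a = l then (1:ℝ≥0∞) else 0) := by
            apply Finset.sum_le_sum
            intro a _
            by_cases hcl : clampInt l u ((a:ℝ) + t) = a
            · rw [if_pos hcl, if_pos (eq_l_of_clampInt ht' hcl)]
            · rw [if_neg hcl]; exact zero_le
        _ = 1 := by
            rw [Finset.sum_ite_eq' (Finset.Icc l u) l (fun _ => (1:ℝ≥0∞))]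
            rw [if_pos (Finset.mem_Icc.mpr ⟨le_refl l, hlu.le⟩)]

lemma per_coord (V : ℝ≥0) (hV : V ≠ 0) (l u : ℤ) (hlu : l < u) (r : ℝ) (hr : 0 < r) :
    ((Finset.Icc l u).card : ℝ≥0∞) *
        ∫⁻ t, Gfun (1/2) (((Finset.Icc l u).card : ℝ≥0∞))⁻¹ (r⁻¹ * t) ∂(gaussianReal 0 V)
      ≤ ∑ a ∈ Finset.Icc l u, gaussianReal 0 V {t : ℝ | clampInt l u ((a:ℝ) + t / r) = a} := by
  set γ := gaussianReal 0 V with hγ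
  have hMpos : 0 < (Finset.Icc l u).card :=
    Finset.card_pos.mpr (Finset.nonempty_Icc.mpr hlu.le)
  have hM0 : ((Finset.Icc l u).card : ℝ≥0∞) ≠ 0 := Nat.cast_ne_zero.mpr hMpos.ne'
  have hMtop : ((Finset.Icc l u).card : ℝ≥0∞) ≠ ⊤ := ENNReal.natCast_ne_top _
  rw [lintegral_Gfun γ (1/2) _ (fun t => r⁻¹ * t) (by fun_prop)]
  have hEoM : MeasurableSet {t : ℝ | |r⁻¹ * t| < 1/2} :=
    measurableSet_lt (by fun_prop) measurable_const
  have hbd : γ {t : ℝ | |r⁻¹ * t| = 1/2} = 0 := by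
    have hsub : {t : ℝ | |r⁻¹ * t| = 1/2} ⊆ {(1/2 * r), -(1/2 * r)} := by
      intro t ht
      simp only [Set.mem_setOf_eq] at ht
      have hrne : r ≠ 0 := hr.ne'
      rcases (abs_eq (by norm_num : (0:ℝ) ≤ 1/2)).mp ht with h | h
      · left; field_simp at h ⊢; linarith
      · right; field_simp at h; simp only [Set.mem_singleton_iff]; linarith
    apply measure_mono_null hsub
    exact (gaussianReal_absolutelyContinuous 0 hV)
      (((Set.finite_singleton _).insert _).measure_zero _)
  have hEEo : γ {t : ℝ | |r⁻¹ * t| ≤ 1/2} = γ {t : ℝ | |r⁻¹ * t| < 1/2} := by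
    apply le_antisymm
    · have hss : {t : ℝ | |r⁻¹ * t| ≤ 1/2}
          ⊆ {t : ℝ | |r⁻¹ * t| < 1/2} ∪ {t : ℝ | |r⁻¹ * t| = 1/2} := by
        intro t ht
        rcases lt_or_eq_of_le (show |r⁻¹ * t| ≤ 1/2 from ht) with h | h
        · exact Or.inl h
        · exact Or.inr h
      calc γ {t : ℝ | |r⁻¹ * t| ≤ 1/2}
          ≤ γ {t : ℝ | |r⁻¹ * t| < 1/2} + γ {t : ℝ | |r⁻¹ * t| = 1/2} :=
            (measure_mono hss).trans (measure_union_le _ _)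
        _ = γ {t : ℝ | |r⁻¹ * t| < 1/2} := by rw [hbd, add_zero]
    · refine measure_mono (fun t ht => ?_)
      have h1 : |r⁻¹ * t| < 1/2 := ht
      exact le_of_lt h1
  have hEc : γ {t : ℝ | |r⁻¹ * t| ≤ 1/2}ᶜ = γ {t : ℝ | |r⁻¹ * t| < 1/2}ᶜ := by
    apply le_antisymm
    · refine measure_mono (Set.compl_subset_compl.mpr (fun t ht => ?_))
      have h1 : |r⁻¹ * t| < 1/2 := ht
      exact le_of_lt h1
    · have hss : {t : ℝ | |r⁻¹ * t| < 1/2}ᶜ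
          ⊆ {t : ℝ | |r⁻¹ * t| ≤ 1/2}ᶜ ∪ {t : ℝ | |r⁻¹ * t| = 1/2} := by
        intro t ht
        have h1 : ¬ |r⁻¹ * t| < 1/2 := ht
        rcases lt_or_eq_of_le (not_lt.mp h1) with h | h
        · exact Or.inl (not_le.mpr h)
        · exact Or.inr h.symm
      calc γ {t : ℝ | |r⁻¹ * t| < 1/2}ᶜ
          ≤ γ {t : ℝ | |r⁻¹ * t| ≤ 1/2}ᶜ + γ {t : ℝ | |r⁻¹ * t| = 1/2} :=
            (measure_mono hss).trans (measure_union_le _ _)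
        _ = γ {t : ℝ | |r⁻¹ * t| ≤ 1/2}ᶜ := by rw [hbd, add_zero]
  have hcompl : {t : ℝ | ¬ |r⁻¹ * t| ≤ 1/2} = {t : ℝ | |r⁻¹ * t| ≤ 1/2}ᶜ := rfl
  rw [hcompl, mul_add, ← mul_assoc, ENNReal.mul_inv_cancel hM0 hMtop, one_mul, hEEo, hEc]
  have hEoC : ∀ a ∈ Finset.Icc l u, {t : ℝ | |r⁻¹ * t| < 1/2}
      ⊆ {t : ℝ | clampInt l u ((a:ℝ) + t / r) = a} := by
    intro a ha t ht
    rw [Finset.mem_Icc] at ha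
    have h1 : |t / r| < 1/2 := by
      rw [div_eq_inv_mul]
      exact ht
    exact clampInt_eq_of_abs_lt ha.1 ha.2 h1
  have hcov : ∀ t : ℝ, ∃ a ∈ Finset.Icc l u,
      t ∈ {t : ℝ | clampInt l u ((a:ℝ) + t / r) = a} := by
    intro t
    rcases le_or_gt 0 (t / r) with h | h
    · exact ⟨u, Finset.mem_Icc.mpr ⟨hlu.le, le_refl u⟩, clampInt_u_of_nonneg hlu.le h⟩
    · exact ⟨l, Finset.mem_Icc.mpr ⟨le_refl l, hlu.le⟩, clampInt_l_of_nonpos hlu.le h.le⟩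
  have hsplitC : ∀ a ∈ Finset.Icc l u, γ {t : ℝ | clampInt l u ((a:ℝ) + t / r) = a}
      = γ {t : ℝ | |r⁻¹ * t| < 1/2}
        + γ ({t : ℝ | clampInt l u ((a:ℝ) + t / r) = a} \ {t : ℝ | |r⁻¹ * t| < 1/2}) := by
    intro a ha
    rw [← measure_inter_add_diff {t : ℝ | clampInt l u ((a:ℝ) + t / r) = a} hEoM]
    congr 2
    rw [Set.inter_eq_self_of_subset_right (hEoC a ha)]
  have hunion : {t : ℝ | |r⁻¹ * t| < 1/2}ᶜ
      ⊆ ⋃ a ∈ Finset.Icc l u,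
        ({t : ℝ | clampInt l u ((a:ℝ) + t / r) = a} \ {t : ℝ | |r⁻¹ * t| < 1/2}) := by
    intro t ht
    obtain ⟨a, ha, hta⟩ := hcov t
    exact Set.mem_biUnion ha ⟨hta, ht⟩
  calc ((Finset.Icc l u).card : ℝ≥0∞) * γ {t : ℝ | |r⁻¹ * t| < 1/2}
        + γ {t : ℝ | |r⁻¹ * t| < 1/2}ᶜ
      ≤ ((Finset.Icc l u).card : ℝ≥0∞) * γ {t : ℝ | |r⁻¹ * t| < 1/2}
          + ∑ a ∈ Finset.Icc l u,
            γ ({t : ℝ | clampInt l u ((a:ℝ) + t / r) = a} \ {t : ℝ | |r⁻¹ * t| < 1/2}) := by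
        refine add_le_add le_rfl ?_
        exact (measure_mono hunion).trans (measure_biUnion_finset_le _ _)
    _ = ∑ a ∈ Finset.Icc l u, (γ {t : ℝ | |r⁻¹ * t| < 1/2}
          + γ ({t : ℝ | clampInt l u ((a:ℝ) + t / r) = a} \ {t : ℝ | |r⁻¹ * t| < 1/2})) := by
        rw [Finset.sum_add_distrib, Finset.sum_const, nsmul_eq_mul]
    _ = ∑ a ∈ Finset.Icc l u, γ {t : ℝ | clampInt l u ((a:ℝ) + t / r) = a} := by
        apply Finset.sum_congr rfl
        intro a ha
        exact (hsplitC a ha).symm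

end Counting

section Decomp

lemma decomp {n : ℕ} {Ω : Type} [MeasurableSpace Ω] (P : Measure Ω) [IsProbabilityMeasure P]
    (v : Ω → Fin n → ℝ) (hmv : Measurable v)
    (xhat : Ω → Fin n → ℤ) (hmx : Measurable xhat)
    (B : Finset (Fin n → ℤ)) (hmem : ∀ ω, xhat ω ∈ B)
    (hunif : ∀ b ∈ B, P {ω | xhat ω = b} = (B.card : ℝ≥0∞)⁻¹)
    (hindep : IndepFun xhat v P)
    (f : (Fin n → ℤ) → (Fin n → ℝ) → Prop)
    (hf : ∀ b, MeasurableSet {x | f b x}) :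
    P {ω | f (xhat ω) (v ω)}
      = ∑ b ∈ B, (B.card : ℝ≥0∞)⁻¹ * Measure.map v P {x | f b x} := by
  have hsing : ∀ b : Fin n → ℤ, MeasurableSet ({b} : Set (Fin n → ℤ)) := by
    intro b
    have h : ({b} : Set (Fin n → ℤ)) = ⋂ i, (fun z : Fin n → ℤ => z i) ⁻¹' {b i} := by
      ext z
      simp [funext_iff]
    rw [h]
    exact MeasurableSet.iInter fun i => (measurable_pi_apply i) (measurableSet_singleton _)
  have hev : {ω | f (xhat ω) (v ω)} = ⋃ b ∈ B, (xhat ⁻¹' {b} ∩ v ⁻¹' {x | f b x}) := by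
    ext ω
    simp only [Set.mem_setOf_eq, Set.mem_iUnion, Set.mem_inter_iff, Set.mem_preimage,
      Set.mem_singleton_iff, exists_prop]
    constructor
    · intro h
      exact ⟨xhat ω, hmem ω, rfl, h⟩
    · rintro ⟨b, _, hxb, hfb⟩
      rw [hxb]
      exact hfb
  have hd : (↑B : Set (Fin n → ℤ)).PairwiseDisjoint
      (fun b => xhat ⁻¹' {b} ∩ v ⁻¹' {x | f b x}) := by
    intro b _ b' _ hbb'
    apply Set.disjoint_left.mpr
    rintro ω ⟨h1, _⟩ hmem'
    obtain ⟨h2, _⟩ := hmem'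
    exact hbb' ((Set.mem_singleton_iff.mp h1).symm.trans (Set.mem_singleton_iff.mp h2))
  rw [hev, measure_biUnion_finset hd (fun b _ => (hmx (hsing b)).inter (hmv (hf b)))]
  apply Finset.sum_congr rfl
  intro b hb
  rw [hindep.measure_inter_preimage_eq_mul _ _ (hsing b) (hf b)]
  congr 1
  · have h : xhat ⁻¹' {b} = {ω | xhat ω = b} := by ext ω; simp
    rw [h, hunif b hb]
  · rw [Measure.map_apply hmv (hf b)]

end Decomp
/-- Theorem 5 of the paper: for a parameter uniformly distributed over the box, the success
probability of the box-constrained rounding detector is at most that of the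
box-constrained Babai detector. -/
theorem success_prob_rounding_le_babai_uniform
    {n : ℕ} (hn : 1 ≤ n)
    (R : Matrix (Fin n) (Fin n) ℝ)
    (hupper : ∀ i j : Fin n, j < i → R i j = 0)
    (hdiag : ∀ i : Fin n, 0 < R i i)
    (σ : ℝ) (hσ : 0 < σ)
    (l u : Fin n → ℤ) (hlu : ∀ i, l i < u i)
    {Ω : Type} [MeasurableSpace Ω] (P : Measure Ω) [IsProbabilityMeasure P]
    (v : Ω → Fin n → ℝ) (hmv : Measurable v)
    (hv : Measure.map v P = Measure.pi fun _ : Fin n => gaussianReal 0 ⟨σ ^ 2, sq_nonneg σ⟩)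
    (B : Finset (Fin n → ℤ)) (hB : B = Fintype.piFinset fun i => Finset.Icc (l i) (u i))
    (xhat : Ω → Fin n → ℤ) (hmx : Measurable xhat)
    (hmem : ∀ ω, xhat ω ∈ B)
    (hunif : ∀ b ∈ B, P {ω | xhat ω = b} = (B.card : ℝ≥0∞)⁻¹)
    (hindep : IndepFun xhat v P) :
    P {ω | roundDetector l u (fun i => (xhat ω i : ℝ) + (R⁻¹ *ᵥ v ω) i) = xhat ω}
      ≤ P {ω | babaiDetector R l u (fun i => (R *ᵥ (fun j => (xhat ω j : ℝ))) i + v ω i) = xhat ω} := by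
  classical
  set V : ℝ≥0 := ⟨σ ^ 2, sq_nonneg σ⟩ with hVdef
  have hVne : V ≠ 0 := by
    intro h
    have h2 : σ ^ 2 = 0 := congrArg Subtype.val h
    have h3 : σ = 0 := by
      exact pow_eq_zero_iff (by norm_num) |>.mp h2
    linarith
  set γ := gaussianReal 0 V with hγ
  set ν := Measure.pi (fun _ : Fin n => γ) with hν
  -- matrix facts
  have hRbt : R.BlockTriangular id := fun i j h => hupper i j h
  have hdet : R.det ≠ 0 := by
    rw [Matrix.det_of_upperTriangular hRbt]
    exact (Finset.prod_pos (fun i _ => hdiag i)).ne'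
  haveI : Invertible R := R.invertibleOfIsUnitDet (isUnit_iff_ne_zero.mpr hdet)
  have hinvbt : R⁻¹.BlockTriangular id := Matrix.blockTriangular_inv_of_blockTriangular hRbt
  have hAup : ∀ i j : Fin n, j < i → R⁻¹ i j = 0 := fun i j h => hinvbt h
  have hAdiag : ∀ i, R⁻¹ i i = (R i i)⁻¹ := by
    intro i
    have hmul : (R * R⁻¹) i i = 1 := by
      rw [Matrix.mul_nonsing_inv R (isUnit_iff_ne_zero.mpr hdet)]
      exact Matrix.one_apply_eq i
    have hexp : (R * R⁻¹) i i = R i i * R⁻¹ i i := by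
      rw [Matrix.mul_apply]
      rw [Finset.sum_eq_single i]
      · intro j _ hj
        rcases lt_or_gt_of_ne hj with h | h
        · rw [hupper i j h, zero_mul]
        · rw [hAup j i h, mul_zero]
      · intro h
        exact absurd (Finset.mem_univ i) h
    rw [hexp] at hmul
    exact (inv_eq_of_mul_eq_one_right hmul).symm
  -- cardinalities
  set M : Fin n → ℕ := fun i => (Finset.Icc (l i) (u i)).card with hM
  have hMpos : ∀ i, 0 < M i := fun i =>
    Finset.card_pos.mpr (Finset.nonempty_Icc.mpr (hlu i).le)
  have hM0 : ∀ i, (M i : ℝ≥0∞) ≠ 0 := fun i => Nat.cast_ne_zero.mpr (hMpos i).ne'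
  have hMtop : ∀ i, (M i : ℝ≥0∞) ≠ ⊤ := fun i => ENNReal.natCast_ne_top _
  have hα : ∀ i, ((M i : ℝ≥0∞))⁻¹ ≤ 1 := fun i =>
    ENNReal.inv_le_one.mpr (by exact_mod_cast (hMpos i))
  -- key sets
  set C : (i : Fin n) → ℤ → Set ℝ :=
    fun i a => {t : ℝ | clampInt (l i) (u i) ((a:ℝ) + t / R i i) = a} with hCdef
  have hCm : ∀ i a, MeasurableSet (C i a) := fun i a =>
    ((measurable_clampInt _ _).comp
      (show Measurable fun t : ℝ => (a:ℝ) + t / R i i by fun_prop))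
      (measurableSet_singleton a)
  have hwm : ∀ (Q : Matrix (Fin n) (Fin n) ℝ) (i : Fin n),
      Measurable fun x : Fin n → ℝ => (Q *ᵥ x) i := by
    intro Q i
    simp only [Matrix.mulVec, dotProduct]
    exact Finset.measurable_sum _ fun j _ => (measurable_pi_apply j).const_mul _
  set SR : (Fin n → ℤ) → Set (Fin n → ℝ) :=
    fun b => {x | roundDetector l u (fun i => (b i : ℝ) + (R⁻¹ *ᵥ x) i) = b} with hSR
  have hSReq : ∀ b, SR b
      = ⋂ i, {x : Fin n → ℝ | clampInt (l i) (u i) ((b i : ℝ) + (R⁻¹ *ᵥ x) i) = b i} := by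
    intro b
    ext x
    simp only [hSR, Set.mem_setOf_eq, Set.mem_iInter, funext_iff]
    rfl
  have hSRm : ∀ b, MeasurableSet (SR b) := by
    intro b
    rw [hSReq b]
    exact MeasurableSet.iInter fun i =>
      ((measurable_clampInt _ _).comp ((hwm R⁻¹ i).const_add _)) (measurableSet_singleton _)
  set SB : (Fin n → ℤ) → Set (Fin n → ℝ) :=
    fun b => {x | babaiDetector R l u (fun i => (R *ᵥ fun j => (b j : ℝ)) i + x i) = b}
    with hSB
  have hSBeq : ∀ b, SB b = Set.pi Set.univ (fun i => C i (b i)) := by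
    intro b
    ext x
    simp only [hSB, Set.mem_setOf_eq, Set.mem_univ_pi]
    exact babai_eq_iff hupper hdiag b x
  have hSBm : ∀ b, MeasurableSet (SB b) := by
    intro b
    rw [hSBeq b]
    exact MeasurableSet.univ_pi fun i => hCm i (b i)
  -- decompositions
  have h1 : P {ω | roundDetector l u (fun i => (xhat ω i : ℝ) + (R⁻¹ *ᵥ v ω) i) = xhat ω}
      = ∑ b ∈ B, (B.card : ℝ≥0∞)⁻¹ * ν (SR b) := by
    have hd := decomp P v hmv xhat hmx B hmem hunif hindep
      (fun b x => roundDetector l u (fun i => (b i : ℝ) + (R⁻¹ *ᵥ x) i) = b) hSRm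
    rw [hv] at hd
    exact hd
  have h2 : P {ω | babaiDetector R l u
        (fun i => (R *ᵥ (fun j => (xhat ω j : ℝ))) i + v ω i) = xhat ω}
      = ∑ b ∈ B, (B.card : ℝ≥0∞)⁻¹ * ν (SB b) := by
    have hd := decomp P v hmv xhat hmx B hmem hunif hindep
      (fun b x => babaiDetector R l u (fun i => (R *ᵥ fun j => (b j : ℝ)) i + x i) = b) hSBm
    rw [hv] at hd
    exact hd
  rw [h1, h2]
  -- key inequality
  set N : (i : Fin n) → ℝ → ℝ≥0∞ := fun i t =>
    ∑ a ∈ Finset.Icc (l i) (u i),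
      if clampInt (l i) (u i) ((a:ℝ) + t) = a then (1:ℝ≥0∞) else 0 with hNdef
  have hkey : ∑ b ∈ B, ν (SR b)
      ≤ ∏ i, ∑ a ∈ Finset.Icc (l i) (u i), γ (C i a) := by
    have hstep1 : ∑ b ∈ B, ν (SR b) = ∫⁻ x, ∏ i, N i ((R⁻¹ *ᵥ x) i) ∂ν := by
      have hind : ∀ b ∈ B, ν (SR b) = ∫⁻ x,
          (∏ i, if clampInt (l i) (u i) ((b i : ℝ) + (R⁻¹ *ᵥ x) i) = b i
            then (1:ℝ≥0∞) else 0) ∂ν := by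
        intro b _
        rw [← lintegral_indicator_one (hSRm b)]
        apply lintegral_congr
        intro x
        rw [Set.indicator_apply]
        by_cases hx : x ∈ SR b
        · rw [if_pos hx]
          have hx' : ∀ i, clampInt (l i) (u i) ((b i : ℝ) + (R⁻¹ *ᵥ x) i) = b i := by
            have h := hx
            rw [hSReq b] at h
            simpa using h
          rw [eq_comm]
          apply Finset.prod_eq_one
          intro i _
          rw [if_pos (hx' i)]
        · rw [if_neg hx]
          have hex : ∃ i, ¬ clampInt (l i) (u i) ((b i : ℝ) + (R⁻¹ *ᵥ x) i) = b i := by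
            by_contra h
            push_neg at h
            apply hx
            rw [hSReq b]
            exact Set.mem_iInter.mpr h
          obtain ⟨i, hi⟩ := hex
          rw [eq_comm]
          exact Finset.prod_eq_zero (Finset.mem_univ i) (if_neg hi)
      have hfm : ∀ b ∈ B, Measurable (fun x : Fin n → ℝ =>
          ∏ i, if clampInt (l i) (u i) ((b i : ℝ) + (R⁻¹ *ᵥ x) i) = b i
            then (1:ℝ≥0∞) else 0) := by
        intro b _
        apply Finset.measurable_prod
        intro i _
        apply Measurable.ite _ measurable_const measurable_const
        exact ((measurable_clampInt _ _).comp ((hwm R⁻¹ i).const_add _))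
          (measurableSet_singleton _)
      rw [Finset.sum_congr rfl hind, ← lintegral_finset_sum _ hfm]
      apply lintegral_congr
      intro x
      rw [hB]
      exact (Finset.prod_univ_sum (fun i => Finset.Icc (l i) (u i))
        (fun i a => if clampInt (l i) (u i) ((a:ℝ) + (R⁻¹ *ᵥ x) i) = a
          then (1:ℝ≥0∞) else 0)).symm
    have hstep2 : ∀ x : Fin n → ℝ, ∏ i, N i ((R⁻¹ *ᵥ x) i)
        ≤ (∏ i, (M i : ℝ≥0∞)) * ∏ i, Gfun (1/2) ((M i : ℝ≥0∞))⁻¹ ((R⁻¹ *ᵥ x) i) := by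
      intro x
      rw [← Finset.prod_mul_distrib]
      apply Finset.prod_le_prod'
      intro i _
      exact Nbound (l i) (u i) (hlu i) _
    have hstep3 : ∫⁻ x, ∏ i, Gfun (1/2) ((M i : ℝ≥0∞))⁻¹ ((R⁻¹ *ᵥ x) i) ∂ν
        ≤ ∏ i, ∫⁻ t, Gfun (1/2) ((M i : ℝ≥0∞))⁻¹ (R⁻¹ i i * t) ∂γ := by
      have hre : ∀ (x : Fin n → ℝ) (i : Fin n),
          (R⁻¹ *ᵥ x) i = (∑ j, R⁻¹ i j * x j) + (0:ℝ) := by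
        intro x i
        simp [Matrix.mulVec, dotProduct]
      calc ∫⁻ x, ∏ i, Gfun (1/2) ((M i : ℝ≥0∞))⁻¹ ((R⁻¹ *ᵥ x) i) ∂ν
          = ∫⁻ x, ∏ i, Gfun (1/2) ((M i : ℝ≥0∞))⁻¹ ((∑ j, R⁻¹ i j * x j) + (0:ℝ)) ∂ν := by
            apply lintegral_congr
            intro x
            apply Finset.prod_congr rfl
            intro i _
            rw [hre]
        _ ≤ _ := core_ineq V hVne n R⁻¹ hAup (fun _ => 1/2) (fun _ => by norm_num)
            (fun i => (M i : ℝ≥0∞)⁻¹) hα (fun _ => 0)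
    calc ∑ b ∈ B, ν (SR b) = ∫⁻ x, ∏ i, N i ((R⁻¹ *ᵥ x) i) ∂ν := hstep1
      _ ≤ ∫⁻ x, (∏ i, (M i : ℝ≥0∞))
            * ∏ i, Gfun (1/2) ((M i : ℝ≥0∞))⁻¹ ((R⁻¹ *ᵥ x) i) ∂ν := lintegral_mono hstep2
      _ = (∏ i, (M i : ℝ≥0∞))
            * ∫⁻ x, ∏ i, Gfun (1/2) ((M i : ℝ≥0∞))⁻¹ ((R⁻¹ *ᵥ x) i) ∂ν :=
          lintegral_const_mul' _ _
            (ENNReal.prod_lt_top (fun i _ => lt_top_iff_ne_top.mpr (hMtop i))).ne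
      _ ≤ (∏ i, (M i : ℝ≥0∞))
            * ∏ i, ∫⁻ t, Gfun (1/2) ((M i : ℝ≥0∞))⁻¹ (R⁻¹ i i * t) ∂γ :=
          mul_le_mul_right hstep3 _
      _ = ∏ i, ((M i : ℝ≥0∞)
            * ∫⁻ t, Gfun (1/2) ((M i : ℝ≥0∞))⁻¹ ((R i i)⁻¹ * t) ∂γ) := by
          rw [← Finset.prod_mul_distrib]
          apply Finset.prod_congr rfl
          intro i _
          rw [hAdiag i]
      _ ≤ ∏ i, ∑ a ∈ Finset.Icc (l i) (u i), γ (C i a) :=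
          Finset.prod_le_prod' (fun i _ => per_coord V hVne (l i) (u i) (hlu i) (R i i) (hdiag i))
  -- conclude
  calc ∑ b ∈ B, (B.card : ℝ≥0∞)⁻¹ * ν (SR b)
      = (B.card : ℝ≥0∞)⁻¹ * ∑ b ∈ B, ν (SR b) := by rw [Finset.mul_sum]
    _ ≤ (B.card : ℝ≥0∞)⁻¹ * ∏ i, ∑ a ∈ Finset.Icc (l i) (u i), γ (C i a) :=
        mul_le_mul_right hkey _
    _ = (B.card : ℝ≥0∞)⁻¹ * ∑ b ∈ B, ∏ i, γ (C i (b i)) := by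
        rw [Finset.prod_univ_sum, hB]
    _ = ∑ b ∈ B, (B.card : ℝ≥0∞)⁻¹ * ν (SB b) := by
        rw [← Finset.mul_sum]
        congr 1
        apply Finset.sum_congr rfl
        intro b _
        rw [hSBeq b, hν, Measure.pi_pi]
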